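/- For each fixed m with 0 ≤ m ≤ n, the sequence c_k := C(k,m) * B_{k-m} (with B_j Bernoulli numbers, and B_j := 0 for j < 0) is the unique solution of the system ∑_{i=0}^{k} c_{k-i} * C(k,i) / (i+1) = δ_{k,m} for all 0 ≤ k ≤ n. -/

import Mathlib

open Finset

/-- Reindexed form of the key identity. -/
lemma aux_sum (m k : ℕ) :
    ∑ j ∈ Finset.range (k + 1),
      ((j.choose m : ℚ) * bernoulli (j - m)) * (k.choose j : ℚ) / ((k - j : ℕ) + 1)
      = if k = m then 1 else 0 := by
  rcases lt_or_ge k m with hk | hk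
  · rw [if_neg (by omega)]
    refine Finset.sum_eq_zero fun j hj => ?_
    rw [Finset.mem_range] at hj
    have : j.choose m = 0 := Nat.choose_eq_zero_of_lt (by omega)
    simp [this]
  · obtain ⟨N, rfl⟩ : ∃ N, k = m + N := ⟨k - m, by omega⟩
    have h1 : ∑ j ∈ Finset.range (m + N + 1),
        ((j.choose m : ℚ) * bernoulli (j - m)) * ((m + N).choose j : ℚ) / ((m + N - j : ℕ) + 1)
        = ∑ j ∈ Finset.Ico m (m + N + 1),
        ((j.choose m : ℚ) * bernoulli (j - m)) * ((m + N).choose j : ℚ) / ((m + N - j : ℕ) + 1) := by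
      refine (Finset.sum_subset ?_ ?_).symm
      · intro x hx
        rw [Finset.mem_Ico] at hx
        exact Finset.mem_range.2 hx.2
      · intro x hx hnx
        rw [Finset.mem_range] at hx
        rw [Finset.mem_Ico] at hnx
        have : x.choose m = 0 := Nat.choose_eq_zero_of_lt (by omega)
        simp [this]
    rw [h1, Finset.sum_Ico_eq_sum_range]
    have h2 : m + N + 1 - m = N + 1 := by omega
    rw [h2]
    have h3 : ∀ t ∈ Finset.range (N + 1),
        (((m + t).choose m : ℚ) * bernoulli (m + t - m)) * ((m + N).choose (m + t) : ℚ)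
          / ((m + N - (m + t) : ℕ) + 1)
        = ((m + N).choose m : ℚ) / (N + 1) * (((N + 1).choose t : ℚ) * bernoulli t) := by
      intro t ht
      rw [Finset.mem_range] at ht
      have e1 : m + t - m = t := by omega
      have e2 : m + N - (m + t) = N - t := by omega
      rw [e1, e2]
      have key : ((m + N).choose (m + t)) * ((m + t).choose m) = ((m + N).choose m) * N.choose t := by
        have := Nat.choose_mul (n := m + N) (k := m + t) (s := m) (by omega)
        simpa using this
      have key2 : (N.choose t) * (N + 1) = ((N + 1).choose t) * ((N - t) + 1) := by
        have h := Nat.choose_mul_succ_eq N t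
        have e3 : N + 1 - t = (N - t) + 1 := by omega
        rw [e3] at h
        exact h
      have comb : ((m + t).choose m) * ((m + N).choose (m + t)) * (N + 1)
          = ((m + N).choose m) * ((N + 1).choose t) * ((N - t) + 1) := by
        rw [mul_comm ((m + t).choose m), key, mul_assoc, key2, ← mul_assoc]
      have combQ : (((m + t).choose m : ℚ)) * ((m + N).choose (m + t) : ℚ) * ((N : ℚ) + 1)
          = ((m + N).choose m : ℚ) * (((N + 1).choose t : ℚ)) * (((N - t : ℕ) : ℚ) + 1) := by
        exact_mod_cast comb
      have hNt : ((N - t : ℕ) : ℚ) + 1 ≠ 0 := by positivity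
      have hN1 : ((N : ℚ) + 1) ≠ 0 := by positivity
      field_simp
      linear_combination bernoulli t * combQ
    rw [Finset.sum_congr rfl h3, ← Finset.mul_sum, sum_bernoulli (N + 1)]
    rcases Nat.eq_zero_or_pos N with hN | hN
    · subst hN; simp
    · rw [if_neg (by omega), if_neg (by omega), mul_zero]

theorem stmt_6 (n m : ℕ) (hm : m ≤ n) :
    (∀ k ≤ n, ∑ i ∈ Finset.range (k + 1),
        (((k - i).choose m : ℚ) * bernoulli (k - i - m)) * (k.choose i : ℚ) / (i + 1)
          = if k = m then 1 else 0) ∧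
    (∀ d : ℕ → ℚ,
      (∀ k ≤ n, ∑ i ∈ Finset.range (k + 1),
          d (k - i) * (k.choose i : ℚ) / (i + 1) = if k = m then 1 else 0) →
      ∀ k ≤ n, d k = (k.choose m : ℚ) * bernoulli (k - m)) := by
  have part1 : ∀ k : ℕ, ∑ i ∈ Finset.range (k + 1),
      (((k - i).choose m : ℚ) * bernoulli (k - i - m)) * (k.choose i : ℚ) / (i + 1)
        = if k = m then 1 else 0 := by
    intro k
    rw [← aux_sum m k, ← Finset.sum_range_reflect]
    refine Finset.sum_congr rfl fun i hi => ?_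
    rw [Finset.mem_range] at hi
    have hik : i ≤ k := by omega
    have e1 : k + 1 - 1 - i = k - i := by omega
    have e2 : k - (k - i) = i := by omega
    have e3 : k.choose (k - i) = k.choose i := Nat.choose_symm hik
    rw [e1, e2, e3]
  constructor
  · exact fun k _ => part1 k
  · intro d hd k hk
    induction k using Nat.strong_induction_on with
    | _ k ih =>
      have hdk := hd k hk
      have hck := part1 k
      rw [Finset.sum_range_succ'] at hdk
      rw [Finset.sum_range_succ'] at hck
      simp only [Nat.sub_zero, Nat.choose_zero_right] at hdk hck
      have hsum : ∑ i ∈ Finset.range k, d (k - (i + 1)) * (k.choose (i + 1) : ℚ) / (i + 1 + 1)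
          = ∑ i ∈ Finset.range k,
            (((k - (i + 1)).choose m : ℚ) * bernoulli (k - (i + 1) - m)) * (k.choose (i + 1) : ℚ)
              / (i + 1 + 1) := by
        refine Finset.sum_congr rfl fun i hi => ?_
        rw [Finset.mem_range] at hi
        have hlt : k - (i + 1) < k := by omega
        rw [ih (k - (i + 1)) hlt (by omega)]
      push_cast at hdk hck hsum
      rw [hsum] at hdk
      linarith [hdk, hck]
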